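/- Let P := 864·A1^3·A2 + 3825·A1·B2^2 − 770·E6·A3·B2 − 840·E6·A2·B3 + 60·E6·A1·B4 + 21·E6^2·A5 ∈ K. Then in K the identity P/E4 = (1/9216)·(24·Δ·E4^2·E6·a2·b1·b2 − 18·Δ·E4^2·E6·a3·b1^2 + 20736·Δ·E4^2·a2·b1^3 + 5·Δ·E4·E6^2·a2^2·b1 − 28440·E6^2·b1^5 − 336·Δ^2·E4·E6·a2·a3 + 4824·Δ·E6^2·b1^2·b3 − 1008·Δ·E6^2·b1·b2^2 − 991872·Δ·E6·b1^3·b2 − 13436928·Δ·b1^5 − 384·Δ^2·E6^2·b5 + 27648·Δ^2·E6·b1·b4 + 76032·Δ^2·E6·b2·b3 − 12690432·Δ^2·b1·b2^2) holds; in particular P/E4 lies in the ℚ-subalgebra of K generated by E4, E6, a2, a3, b1, b2, b3, b4, b5. -/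

import Mathlib

set_option maxHeartbeats 1000000

noncomputable section

namespace E8Jacobi

/-- `K` is the fraction field of the polynomial ring
`ℚ[E4, E6, A1, A2, A3, A4, A5, B2, B3, B4, B6]` in eleven indeterminates. -/
abbrev K : Type := FractionRing (MvPolynomial (Fin 11) ℚ)

def v (i : Fin 11) : K := algebraMap (MvPolynomial (Fin 11) ℚ) K (MvPolynomial.X i)

def E4 : K := v 0
def E6 : K := v 1
def A1 : K := v 2
def A2 : K := v 3
def A3 : K := v 4
def A4 : K := v 5
def A5 : K := v 6
def B2 : K := v 7
def B3 : K := v 8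
def B4 : K := v 9
def B6 : K := v 10

def Δ : K := (E4^3 - E6^2)/1728

def b1 : K := -4*A1/E4
def a2 : K := (6/(E4*Δ)) * (-E4*A2 + A1^2)
def b2 : K := (5/(6*E4^2*Δ)) * (E4^2*B2 - E6*A1^2)
def a3 : K := (1/(9*E4^2*Δ^2)) *
  (-7*E4^2*E6*A3 - 20*E4^3*B3 - 9*E4*E6*A1*A2 + 30*E4^2*A1*B2 + 6*E6*A1^3)
def b3 : K := (1/(108*E4^3*Δ^2)) *
  (-7*E4^5*A3 - 20*E4^3*E6*B3 - 9*E4^4*A1*A2 + 30*E4^2*E6*A1*B2 + (16*E4^3 - 10*E6^2)*A1^3)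
def a4 : K := (1/(864*E4^3*Δ^3)) *
  ((E4^6 - E4^3*E6^2)*A4 + (56*E4^5 - 56*E4^2*E6^2)*A1*A3 - 27*E4^5*A2^2
   - 90*E4^3*E6*A2*B2 - 75*E4^4*B2^2 + (180*E4^4 - 36*E4*E6^2)*A1^2*A2
   + 240*E4^2*E6*A1^2*B2 + (-210*E4^3 + 18*E6^2)*A1^4)
def b4 : K := (1/(1728*E4^4*Δ^3)) *
  ((-5*E4^7 + 5*E4^4*E6^2)*B4 + (80*E4^6 - 80*E4^3*E6^2)*A1*B3
   + 9*E4^5*E6*A2^2 + 30*E4^6*A2*B2 + 25*E4^4*E6*B2^2 - 48*E4^4*E6*A1^2*A2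
   + (-140*E4^5 + 60*E4^2*E6^2)*A1^2*B2 + (74*E4^3*E6 - 10*E6^3)*A1^4)
def b5 : K := (1/(72*E4^5*Δ^3)) *
  ((-21*E4^7 + 21*E4^4*E6^2)*A5 - 294*E4^6*A2*A3 - 770*E4^4*E6*B2*A3
   - 840*E4^4*E6*A2*B3 - 2200*E4^5*B2*B3 + 168*E4^5*A1^2*A3
   + 480*E4^3*E6*A1^2*B3 - 621*E4^5*A1*A2^2 + 3525*E4^4*A1*B2^2
   + 1224*E4^4*A1^3*A2 - 240*E4^2*E6*A1^3*B2 + (-456*E4^3 + 24*E6^2)*A1^5)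
def b6 : K := (1/(13436928*E4^6*Δ^5)) *
  ((-20*E4^12 + 40*E4^9*E6^2 - 20*E4^6*E6^4)*B6
   + (-189*E4^10*E6 + 378*E4^7*E6^3 - 189*E4^4*E6^5)*A1*A5
   + (-9*E4^10*E6 + 9*E4^7*E6^3)*A2*A4
   + (-15*E4^11 + 15*E4^8*E6^2)*B2*A4
   + (-180*E4^11 + 180*E4^8*E6^2)*A2*B4
   + (-300*E4^9*E6 + 300*E4^6*E6^3)*B2*B4
   + (22*E4^9*E6 - 22*E4^6*E6^3)*A1^2*A4
   + (150*E4^10 + 120*E4^7*E6^2 - 270*E4^4*E6^4)*A1^2*B4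
   + (196*E4^10*E6 - 196*E4^7*E6^3)*A3^2
   + (1120*E4^11 - 1120*E4^8*E6^2)*A3*B3
   + (1600*E4^9*E6 - 1600*E4^6*E6^3)*B3^2
   + (-2982*E4^9*E6 + 2982*E4^6*E6^3)*A1*A2*A3
   + (-2520*E4^10 - 4410*E4^7*E6^2 + 6930*E4^4*E6^4)*A1*B2*A3
   + (3360*E4^10 - 10920*E4^7*E6^2 + 7560*E4^4*E6^4)*A1*A2*B3
   + (-19800*E4^8*E6 + 19800*E4^5*E6^3)*A1*B2*B3
   + (2016*E4^8*E6 - 2016*E4^5*E6^3)*A1^3*A3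
   + (-5920*E4^9 + 7360*E4^6*E6^2 - 1440*E4^3*E6^4)*A1^3*B3
   + (405*E4^9*E6 + 162*E4^6*E6^3)*A2^3
   + (1215*E4^10 + 1620*E4^7*E6^2)*A2^2*B2
   + 4725*E4^8*E6*A2*B2^2
   + (1125*E4^9 + 1500*E4^6*E6^2)*B2^3
   + (-9477*E4^8*E6 + 5103*E4^5*E6^3)*A1^2*A2^2
   + (-9180*E4^9 - 5400*E4^6*E6^2)*A1^2*A2*B2
   + (20925*E4^7*E6 - 33075*E4^4*E6^3)*A1^2*B2^2
   + (20304*E4^7*E6 - 9072*E4^4*E6^3)*A1^4*A2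
   + (12780*E4^8 + 5400*E4^5*E6^2 + 540*E4^2*E6^4)*A1^4*B2
   + (-11076*E4^6*E6 + 1512*E4^3*E6^3 - 36*E6^5)*A1^6)

/-- The Jacobi form `P_{16,5}`. -/
def P165 : K := 864*A1^3*A2 + 3825*A1*B2^2 - 770*E6*A3*B2 - 840*E6*A2*B3
  + 60*E6*A1*B4 + 21*E6^2*A5


lemma poly_ne : (MvPolynomial.X 0 ^ 3 - MvPolynomial.X 1 ^ 2 : MvPolynomial (Fin 11) ℚ) ≠ 0 := by
  intro h
  have := congrArg (MvPolynomial.eval (fun i => if i = 0 then (1:ℚ) else 0)) h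
  simp at this

lemma inj' : Function.Injective (algebraMap (MvPolynomial (Fin 11) ℚ) K) :=
  IsFractionRing.injective _ _

lemma hE4 : E4 ≠ 0 := by
  simp only [E4, v]
  rw [map_ne_zero_iff _ inj']
  exact MvPolynomial.X_ne_zero 0

lemma hC : E4^3 - E6^2 ≠ 0 := by
  have : E4 ^ 3 - E6 ^ 2
      = algebraMap (MvPolynomial (Fin 11) ℚ) K (MvPolynomial.X 0 ^ 3 - MvPolynomial.X 1 ^ 2) := by
    simp [E4, E6, v]
  rw [this, map_ne_zero_iff _ inj']
  exact poly_ne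

lemma hΔ : Δ ≠ 0 := by
  simp only [Δ]
  exact div_ne_zero hC (by norm_num)

lemma hrel : (1728 : K) * Δ = E4^3 - E6^2 := by
  simp only [Δ]; ring

lemma ce1 : E4 * b1 = -4*A1 := by
  simp only [b1]
  field_simp [hE4]

lemma ce2 : E4*Δ*a2 = 6*(-E4*A2 + A1^2) := by
  simp only [a2]
  field_simp [hE4, hΔ]
  try ring

lemma ce3 : 6*E4^2*Δ*b2 = 5*(E4^2*B2 - E6*A1^2) := by
  simp only [b2]
  field_simp [hE4, hΔ]
  try ring

lemma ce4 : 9*E4^2*Δ^2*a3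
    = -7*E4^2*E6*A3 - 20*E4^3*B3 - 9*E4*E6*A1*A2 + 30*E4^2*A1*B2 + 6*E6*A1^3 := by
  simp only [a3]
  field_simp [hE4, hΔ]
  try ring

lemma ce5 : 108*E4^3*Δ^2*b3
    = -7*E4^5*A3 - 20*E4^3*E6*B3 - 9*E4^4*A1*A2 + 30*E4^2*E6*A1*B2 + (16*E4^3 - 10*E6^2)*A1^3 := by
  simp only [b3]
  field_simp [hE4, hΔ]
  try ring

lemma ce6 : 1728*E4^4*Δ^3*b4
    = (-5*E4^7 + 5*E4^4*E6^2)*B4 + (80*E4^6 - 80*E4^3*E6^2)*A1*B3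
      + 9*E4^5*E6*A2^2 + 30*E4^6*A2*B2 + 25*E4^4*E6*B2^2 - 48*E4^4*E6*A1^2*A2
      + (-140*E4^5 + 60*E4^2*E6^2)*A1^2*B2 + (74*E4^3*E6 - 10*E6^3)*A1^4 := by
  simp only [b4]
  field_simp [hE4, hΔ]
  try ring

lemma ce7 : 72*E4^5*Δ^3*b5
    = (-21*E4^7 + 21*E4^4*E6^2)*A5 - 294*E4^6*A2*A3 - 770*E4^4*E6*B2*A3
      - 840*E4^4*E6*A2*B3 - 2200*E4^5*B2*B3 + 168*E4^5*A1^2*A3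
      + 480*E4^3*E6*A1^2*B3 - 621*E4^5*A1*A2^2 + 3525*E4^4*A1*B2^2
      + 1224*E4^4*A1^3*A2 - 240*E4^2*E6*A1^3*B2 + (-456*E4^3 + 24*E6^2)*A1^5 := by
  simp only [b5]
  field_simp [hE4, hΔ]
  try ring

lemma main_eq :
    P165/E4 = (1/9216) * (24*Δ*E4^2*E6*a2*b1*b2 - 18*Δ*E4^2*E6*a3*b1^2
      + 20736*Δ*E4^2*a2*b1^3 + 5*Δ*E4*E6^2*a2^2*b1 - 28440*E6^2*b1^5
      - 336*Δ^2*E4*E6*a2*a3 + 4824*Δ*E6^2*b1^2*b3 - 1008*Δ*E6^2*b1*b2^2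
      - 991872*Δ*E6*b1^3*b2 - 13436928*Δ*b1^5 - 384*Δ^2*E6^2*b5
      + 27648*Δ^2*E6*b1*b4 + 76032*Δ^2*E6*b2*b3 - 12690432*Δ^2*b1*b2^2) := by
  rw [div_eq_iff hE4]
  have hk : (9216 : K)*Δ^3*E4^4 ≠ 0 :=
    mul_ne_zero (mul_ne_zero (by norm_num) (pow_ne_zero _ hΔ)) (pow_ne_zero _ hE4)
  refine mul_left_cancel₀ hk ?_
  simp only [P165]
  linear_combination
    ((16/3 : K)*Δ^2*E6^2) * ce7
    + ((-16 : K)*E4*Δ^2*E6*b1) * ce6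
    + ((-134/3 : K)*E4^2*Δ^2*E6^2*b1^2 + (-704 : K)*E4^2*Δ^3*E6*b2) * ce5
    + ((112/3 : K)*E4^4*Δ^3*E6*a2 + (2 : K)*E4^5*Δ^2*E6*b1^2) * ce4
    + ((3520/3 : K)*Δ^2*E6^3*A1^3 + (-140 : K)*E4*Δ^2*E6^3*A1^2*b1 + (-1762560 : K)*E4*Δ^3*E6*A1^2*b1 + (-3520 : K)*E4^2*Δ^2*E6^2*A1*B2 + (-5632/3 : K)*E4^3*Δ^2*E6*A1^3 + (7040/3 : K)*E4^3*Δ^2*E6^2*B3 + (140 : K)*E4^3*Δ^2*E6^2*B2*b1 + (1762560 : K)*E4^3*Δ^3*B2*b1 + (165312 : K)*E4^3*Δ^3*E6*b1^3 + (168 : K)*E4^3*Δ^3*E6^2*b1*b2 + (2115072 : K)*E4^3*Δ^4*b1*b2 + (1056 : K)*E4^4*Δ^2*E6*A1*A2 + (2464/3 : K)*E4^5*Δ^2*E6*A3 + (-4 : K)*E4^5*Δ^3*E6*b1*a2) * ce3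
    + ((224 : K)*E4^3*Δ^2*E6^2*A1^3 + (-336 : K)*E4^4*Δ^2*E6^2*A1*A2 + (-10 : K)*E4^4*Δ^2*E6^2*A1^2*b1 + (1120 : K)*E4^5*Δ^2*E6*A1*B2 + (-784/3 : K)*E4^5*Δ^2*E6^2*A3 + (30 : K)*E4^5*Δ^2*E6^2*A2*b1 + (-5 : K)*E4^5*Δ^3*E6^2*b1*a2 + (-2240/3 : K)*E4^6*Δ^2*E6*B3 + (-20 : K)*E4^6*Δ^2*E6*B2*b1 + (-20736 : K)*E4^6*Δ^3*b1^3) * ce2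
    + ((-2780/3 : K)*Δ^2*E6^4*A1^4 + (2868480 : K)*Δ^3*E6^2*A1^4 + (3439853568 : K)*Δ^4*A1^4 + (1340/3 : K)*E4*Δ^2*E6^4*A1^3*b1 + (1486080 : K)*E4*Δ^3*E6^2*A1^3*b1 + (-859963392 : K)*E4*Δ^4*A1^3*b1 + (3000 : K)*E4^2*Δ^2*E6^3*A1^2*B2 + (-4400640 : K)*E4^2*Δ^3*E6*A1^2*B2 + (-371520 : K)*E4^2*Δ^3*E6^2*A1^2*b1^2 + (214990848 : K)*E4^2*Δ^4*A1^2*b1^2 + (4700/3 : K)*E4^3*Δ^2*E6^2*A1^4 + (-6880/3 : K)*E4^3*Δ^2*E6^3*A1*B3 + (-1340 : K)*E4^3*Δ^2*E6^3*A1*B2*b1 + (-1990656 : K)*E4^3*Δ^3*A1^4 + (-3306240 : K)*E4^3*Δ^3*E6*A1*B2*b1 + (-113760 : K)*E4^3*Δ^3*E6^2*A1*b1^3 + (-53747712 : K)*E4^3*Δ^4*A1*b1^3 + (300 : K)*E4^4*Δ^2*E6^2*B2^2 + (-528 : K)*E4^4*Δ^2*E6^2*A1^2*A2 + (-2108/3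 : K)*E4^4*Δ^2*E6^2*A1^3*b1 + (-80 : K)*E4^4*Δ^2*E6^3*B4 + (2680/3 : K)*E4^4*Δ^2*E6^3*B3*b1 + (8812800 : K)*E4^4*Δ^3*B2^2 + (1990656 : K)*E4^4*Δ^3*A1^2*A2 + (497664 : K)*E4^4*Δ^3*A1^3*b1 + (826560 : K)*E4^4*Δ^3*E6*B2*b1^2 + (28440 : K)*E4^4*Δ^3*E6^2*b1^4 + (13436928 : K)*E4^4*Δ^4*b1^4 + (1880 : K)*E4^5*Δ^2*E6*A1^2*B2 + (-324 : K)*E4^5*Δ^2*E6^2*A2^2 + (-3584/3 : K)*E4^5*Δ^2*E6^2*A1*A3 + (384 : K)*E4^5*Δ^2*E6^2*A1*A2*b1 + (-497664 : K)*E4^5*Δ^3*A1*A2*b1 + (-124416 : K)*E4^5*Δ^3*A1^2*b1^2 + (-360 : K)*E4^6*Δ^2*E6*A2*B2 + (-1120 : K)*E4^6*Δ^2*E6*A1*B3 + (60 : K)*E4^6*Δ^2*E6*A1*B2*b1 + (896/3 : K)*E4^6*Δ^2*E6^2*A3*b1 + (124416 : K)*E4^6*Δ^3*A2*b1^2 +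 (80 : K)*E4^7*Δ^2*E6*B4 + (-40 : K)*E4^7*Δ^2*E6*B3*b1) * ce1
    + ((-2032 : K)*Δ^2*E6^2*A1^5 + (-7962624 : K)*Δ^3*A1^5 + (30560/3 : K)*E4^2*Δ^2*E6*A1^3*B2 + (-12320/3 : K)*E4^4*Δ^2*E6*A3*B2 + (-4480 : K)*E4^4*Δ^2*E6*A2*B3 + (320 : K)*E4^4*Δ^2*E6*A1*B4 + (112 : K)*E4^4*Δ^2*E6^2*A5) * hrel

lemma ratMem (S : Subalgebra ℚ K) (q : ℚ) : (q : K) ∈ S := by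
  have := S.algebraMap_mem q
  rwa [eq_ratCast (algebraMap ℚ K) q] at this

theorem P165_div_E4_in_terms_of_ab :
    P165/E4 = (1/9216) * (24*Δ*E4^2*E6*a2*b1*b2 - 18*Δ*E4^2*E6*a3*b1^2
      + 20736*Δ*E4^2*a2*b1^3 + 5*Δ*E4*E6^2*a2^2*b1 - 28440*E6^2*b1^5
      - 336*Δ^2*E4*E6*a2*a3 + 4824*Δ*E6^2*b1^2*b3 - 1008*Δ*E6^2*b1*b2^2
      - 991872*Δ*E6*b1^3*b2 - 13436928*Δ*b1^5 - 384*Δ^2*E6^2*b5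
      + 27648*Δ^2*E6*b1*b4 + 76032*Δ^2*E6*b2*b3 - 12690432*Δ^2*b1*b2^2) ∧
    P165/E4 ∈ Algebra.adjoin ℚ ({E4, E6, a2, a3, b1, b2, b3, b4, b5} : Set K) := by
  have h1 := main_eq
  refine ⟨h1, ?_⟩
  rw [h1]
  set S := Algebra.adjoin ℚ ({E4, E6, a2, a3, b1, b2, b3, b4, b5} : Set K) with hS
  have hE4S : E4 ∈ S := Algebra.subset_adjoin (Set.mem_insert _ _)
  have hE6S : E6 ∈ S := Algebra.subset_adjoin (Set.mem_insert_of_mem _ (Set.mem_insert _ _))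
  have ha2S : a2 ∈ S := Algebra.subset_adjoin (Set.mem_insert_of_mem _ (Set.mem_insert_of_mem _ (Set.mem_insert _ _)))
  have ha3S : a3 ∈ S := Algebra.subset_adjoin (Set.mem_insert_of_mem _ (Set.mem_insert_of_mem _ (Set.mem_insert_of_mem _ (Set.mem_insert _ _))))
  have hb1S : b1 ∈ S := Algebra.subset_adjoin (Set.mem_insert_of_mem _ (Set.mem_insert_of_mem _ (Set.mem_insert_of_mem _ (Set.mem_insert_of_mem _ (Set.mem_insert _ _)))))
  have hb2S : b2 ∈ S := Algebra.subset_adjoin (Set.mem_insert_of_mem _ (Set.mem_insert_of_mem _ (Set.mem_insert_of_mem _ (Set.mem_insert_of_mem _ (Set.mem_insert_of_mem _ (Set.mem_insert _ _))))))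
  have hb3S : b3 ∈ S := Algebra.subset_adjoin (Set.mem_insert_of_mem _ (Set.mem_insert_of_mem _ (Set.mem_insert_of_mem _ (Set.mem_insert_of_mem _ (Set.mem_insert_of_mem _ (Set.mem_insert_of_mem _ (Set.mem_insert _ _)))))))
  have hb4S : b4 ∈ S := Algebra.subset_adjoin (Set.mem_insert_of_mem _ (Set.mem_insert_of_mem _ (Set.mem_insert_of_mem _ (Set.mem_insert_of_mem _ (Set.mem_insert_of_mem _ (Set.mem_insert_of_mem _ (Set.mem_insert_of_mem _ (Set.mem_insert _ _))))))))
  have hb5S : b5 ∈ S := Algebra.subset_adjoin (Set.mem_insert_of_mem _ (Set.mem_insert_of_mem _ (Set.mem_insert_of_mem _ (Set.mem_insert_of_mem _ (Set.mem_insert_of_mem _ (Set.mem_insert_of_mem _ (Set.mem_insert_of_mem _ (Set.mem_insert_of_mem _ (Set.mem_singleton _)))))))))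
  have hinv : (1/9216 : K) ∈ S := by
    have := ratMem S (1/9216)
    rwa [show ((1/9216 : ℚ) : K) = (1/9216 : K) by norm_num] at this
  have hΔS : Δ ∈ S := by
    have hd : Δ = ((1/1728 : ℚ) : K) * (E4^3 - E6^2) := by
      rw [show (((1/1728 : ℚ)) : K) = (1/1728 : K) by norm_num]
      simp only [Δ]; ring
    rw [hd]
    exact mul_mem (ratMem S _) (sub_mem (pow_mem hE4S 3) (pow_mem hE6S 2))
  have hn1008 : (1008 : K) ∈ S := by
    have := S.algebraMap_mem (1008 : ℚ); rwa [map_ofNat] at this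
  have hn12690432 : (12690432 : K) ∈ S := by
    have := S.algebraMap_mem (12690432 : ℚ); rwa [map_ofNat] at this
  have hn13436928 : (13436928 : K) ∈ S := by
    have := S.algebraMap_mem (13436928 : ℚ); rwa [map_ofNat] at this
  have hn18 : (18 : K) ∈ S := by
    have := S.algebraMap_mem (18 : ℚ); rwa [map_ofNat] at this
  have hn20736 : (20736 : K) ∈ S := by
    have := S.algebraMap_mem (20736 : ℚ); rwa [map_ofNat] at this
  have hn24 : (24 : K) ∈ S := by
    have := S.algebraMap_mem (24 : ℚ); rwa [map_ofNat] at this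
  have hn27648 : (27648 : K) ∈ S := by
    have := S.algebraMap_mem (27648 : ℚ); rwa [map_ofNat] at this
  have hn28440 : (28440 : K) ∈ S := by
    have := S.algebraMap_mem (28440 : ℚ); rwa [map_ofNat] at this
  have hn336 : (336 : K) ∈ S := by
    have := S.algebraMap_mem (336 : ℚ); rwa [map_ofNat] at this
  have hn384 : (384 : K) ∈ S := by
    have := S.algebraMap_mem (384 : ℚ); rwa [map_ofNat] at this
  have hn4824 : (4824 : K) ∈ S := by
    have := S.algebraMap_mem (4824 : ℚ); rwa [map_ofNat] at this
  have hn5 : (5 : K) ∈ S := by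
    have := S.algebraMap_mem (5 : ℚ); rwa [map_ofNat] at this
  have hn76032 : (76032 : K) ∈ S := by
    have := S.algebraMap_mem (76032 : ℚ); rwa [map_ofNat] at this
  have hn991872 : (991872 : K) ∈ S := by
    have := S.algebraMap_mem (991872 : ℚ); rwa [map_ofNat] at this
  have hT1 : (24 : K)*Δ*E4^2*E6*a2*b1*b2 ∈ S := (mul_mem (mul_mem (mul_mem (mul_mem (mul_mem (mul_mem hn24 hΔS) (pow_mem hE4S 2)) hE6S) ha2S) hb1S) hb2S)
  have hT2 : (18 : K)*Δ*E4^2*E6*a3*b1^2 ∈ S := (mul_mem (mul_mem (mul_mem (mul_mem (mul_mem hn18 hΔS) (pow_mem hE4S 2)) hE6S) ha3S) (pow_mem hb1S 2))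
  have hT3 : (20736 : K)*Δ*E4^2*a2*b1^3 ∈ S := (mul_mem (mul_mem (mul_mem (mul_mem hn20736 hΔS) (pow_mem hE4S 2)) ha2S) (pow_mem hb1S 3))
  have hT4 : (5 : K)*Δ*E4*E6^2*a2^2*b1 ∈ S := (mul_mem (mul_mem (mul_mem (mul_mem (mul_mem hn5 hΔS) hE4S) (pow_mem hE6S 2)) (pow_mem ha2S 2)) hb1S)
  have hT5 : (28440 : K)*E6^2*b1^5 ∈ S := (mul_mem (mul_mem hn28440 (pow_mem hE6S 2)) (pow_mem hb1S 5))
  have hT6 : (336 : K)*Δ^2*E4*E6*a2*a3 ∈ S := (mul_mem (mul_mem (mul_mem (mul_mem (mul_mem hn336 (pow_mem hΔS 2)) hE4S) hE6S) ha2S) ha3S)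
  have hT7 : (4824 : K)*Δ*E6^2*b1^2*b3 ∈ S := (mul_mem (mul_mem (mul_mem (mul_mem hn4824 hΔS) (pow_mem hE6S 2)) (pow_mem hb1S 2)) hb3S)
  have hT8 : (1008 : K)*Δ*E6^2*b1*b2^2 ∈ S := (mul_mem (mul_mem (mul_mem (mul_mem hn1008 hΔS) (pow_mem hE6S 2)) hb1S) (pow_mem hb2S 2))
  have hT9 : (991872 : K)*Δ*E6*b1^3*b2 ∈ S := (mul_mem (mul_mem (mul_mem (mul_mem hn991872 hΔS) hE6S) (pow_mem hb1S 3)) hb2S)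
  have hT10 : (13436928 : K)*Δ*b1^5 ∈ S := (mul_mem (mul_mem hn13436928 hΔS) (pow_mem hb1S 5))
  have hT11 : (384 : K)*Δ^2*E6^2*b5 ∈ S := (mul_mem (mul_mem (mul_mem hn384 (pow_mem hΔS 2)) (pow_mem hE6S 2)) hb5S)
  have hT12 : (27648 : K)*Δ^2*E6*b1*b4 ∈ S := (mul_mem (mul_mem (mul_mem (mul_mem hn27648 (pow_mem hΔS 2)) hE6S) hb1S) hb4S)
  have hT13 : (76032 : K)*Δ^2*E6*b2*b3 ∈ S := (mul_mem (mul_mem (mul_mem (mul_mem hn76032 (pow_mem hΔS 2)) hE6S) hb2S) hb3S)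
  have hT14 : (12690432 : K)*Δ^2*b1*b2^2 ∈ S := (mul_mem (mul_mem (mul_mem hn12690432 (pow_mem hΔS 2)) hb1S) (pow_mem hb2S 2))
  exact mul_mem hinv (sub_mem (add_mem (add_mem (sub_mem (sub_mem (sub_mem (sub_mem (add_mem (sub_mem (sub_mem (add_mem (add_mem (sub_mem hT1 hT2) hT3) hT4) hT5) hT6) hT7) hT8) hT9) hT10) hT11) hT12) hT13) hT14)


end E8Jacobi
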